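/- arXiv:1510.03721 — 2 statements merged into one kernel-verified Lean document; each statement's English description precedes it below -/
import Mathlib

section
/- Let q be a prime power and n, s integers with 1 ≤ s ≤ n−1 and n−s ≤ q. Then |Σ_{r=1}^{n−s} (−1)^{r−1} (C(q,r) q^{1−r} − q/r!) − 1/(2e)| ≤ 1/(2(n−s−1)!) + 7/q, where C(q,r) is the binomial coefficient and e is Euler's number. -/
open Finset Real

lemma exp_partial_bound (N : ℕ) :
    |(∑ k ∈ range N, (-1 : ℝ) ^ k / k.factorial) - Real.exp (-1)| ≤ 1 / N.factorial := by
  have h := Real.exp_bound (x := (-1 : ℝ)) (by norm_num) (n := N + 2) (by omega)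
  have hsum : ∑ m ∈ range (N + 2), (-1 : ℝ) ^ m / m.factorial
      = (∑ k ∈ range N, (-1 : ℝ) ^ k / k.factorial)
        + ((-1 : ℝ) ^ N / N.factorial + (-1 : ℝ) ^ (N + 1) / (N + 1).factorial) := by
    rw [Finset.sum_range_succ, Finset.sum_range_succ]; ring
  rw [hsum, abs_neg, abs_one, one_pow, one_mul] at h
  have hfN : (0 : ℝ) < N.factorial := by exact_mod_cast N.factorial_pos
  have hfN1 : ((N + 1).factorial : ℝ) = (N + 1) * N.factorial := by
    rw [Nat.factorial_succ]; push_cast; ring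
  have hfN2 : ((N + 2).factorial : ℝ) = (N + 2) * ((N + 1) * N.factorial) := by
    rw [Nat.factorial_succ, Nat.factorial_succ]; push_cast; ring
  have hab : |(-1 : ℝ) ^ N / N.factorial + (-1 : ℝ) ^ (N + 1) / (N + 1).factorial|
      = 1 / N.factorial - 1 / (N + 1).factorial := by
    have he : (-1 : ℝ) ^ N / N.factorial + (-1 : ℝ) ^ (N + 1) / (N + 1).factorial
        = (-1 : ℝ) ^ N * (1 / N.factorial - 1 / (N + 1).factorial) := by
      rw [pow_succ]; ring
    rw [he, abs_mul, abs_pow, abs_neg, abs_one, one_pow, one_mul, abs_of_nonneg]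
    rw [sub_nonneg, div_le_div_iff₀ (by positivity) (by positivity), hfN1]
    nlinarith [hfN]
  have hrem : (((N + 2 : ℕ)).succ : ℝ) / ((N + 2).factorial * ((N + 2 : ℕ) : ℝ)) ≤ 1 / (N + 1).factorial := by
    rw [div_le_div_iff₀ (by positivity) (by positivity), hfN2, hfN1]
    push_cast
    nlinarith [hfN, sq_nonneg ((N : ℝ))]
  have key : |(∑ k ∈ range N, (-1 : ℝ) ^ k / k.factorial) - Real.exp (-1)|
      ≤ |Real.exp (-1) - ((∑ k ∈ range N, (-1 : ℝ) ^ k / k.factorial)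
          + ((-1 : ℝ) ^ N / N.factorial + (-1 : ℝ) ^ (N + 1) / (N + 1).factorial))|
        + |(-1 : ℝ) ^ N / N.factorial + (-1 : ℝ) ^ (N + 1) / (N + 1).factorial| := by
    have he : (∑ k ∈ range N, (-1 : ℝ) ^ k / k.factorial) - Real.exp (-1)
        = -((Real.exp (-1) - ((∑ k ∈ range N, (-1 : ℝ) ^ k / k.factorial)
          + ((-1 : ℝ) ^ N / N.factorial + (-1 : ℝ) ^ (N + 1) / (N + 1).factorial)))
          + ((-1 : ℝ) ^ N / N.factorial + (-1 : ℝ) ^ (N + 1) / (N + 1).factorial)) := by ring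
    rw [he, abs_neg]
    exact abs_add_le _ _
  have h1N : (0:ℝ) < (N+1).factorial := by positivity
  rw [hab] at key
  have := le_trans h hrem
  linarith

lemma prod_one_sub_bounds (q : ℕ) (hq : 0 < q) :
    ∀ r : ℕ, r ≤ q →
      1 - (∑ j ∈ range r, (j : ℝ)) / q ≤ ∏ j ∈ range r, (1 - (j : ℝ) / q) ∧
      ∏ j ∈ range r, (1 - (j : ℝ) / q) ≤
        1 - (∑ j ∈ range r, (j : ℝ)) / q + ((∑ j ∈ range r, (j : ℝ)) / q) ^ 2 / 2 := by
  intro r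
  induction r with
  | zero => simp
  | succ r ih =>
    intro hr
    obtain ⟨h1, h2⟩ := ih (by omega)
    have hqR : (0 : ℝ) < q := by exact_mod_cast hq
    have hx0 : (0 : ℝ) ≤ (r : ℝ) / q := by positivity
    have hx1 : (r : ℝ) / q ≤ 1 := by
      rw [div_le_one hqR]; exact_mod_cast Nat.le_of_succ_le hr
    have hS0 : (0 : ℝ) ≤ ∑ j ∈ range r, (j : ℝ) :=
      Finset.sum_nonneg fun j _ => by positivity
    have hT0 : (0 : ℝ) ≤ (∑ j ∈ range r, (j : ℝ)) / q := by positivity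
    rw [Finset.prod_range_succ, Finset.sum_range_succ, add_div]
    constructor
    · nlinarith [mul_nonneg (by linarith : (0:ℝ) ≤ (∏ j ∈ range r, (1 - (j : ℝ) / q)) - (1 - (∑ j ∈ range r, (j : ℝ)) / q)) (by linarith : (0:ℝ) ≤ 1 - (r : ℝ)/q), mul_nonneg hT0 hx0]
    · nlinarith [mul_nonneg (by linarith : (0:ℝ) ≤ (1 - (∑ j ∈ range r, (j : ℝ)) / q + ((∑ j ∈ range r, (j : ℝ)) / q) ^ 2 / 2) - ∏ j ∈ range r, (1 - (j : ℝ) / q)) (by linarith : (0:ℝ) ≤ 1 - (r : ℝ)/q), mul_nonneg (mul_nonneg hT0 hT0) hx0, mul_nonneg hx0 hx0]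

lemma choose_zpow_eq (q : ℕ) (hq : 0 < q) (r : ℕ) (hr : r ≤ q) :
    (q.choose r : ℝ) * (q : ℝ) ^ ((1 : ℤ) - (r : ℤ)) =
      (q : ℝ) / r.factorial * ∏ j ∈ range r, (1 - (j : ℝ) / q) := by
  have hqR : (0 : ℝ) < q := by exact_mod_cast hq
  have hchoose : (q.choose r : ℝ) = (q.descFactorial r : ℝ) / r.factorial := by
    rw [Nat.descFactorial_eq_factorial_mul_choose]
    push_cast
    field_simp
  have hdesc : (q.descFactorial r : ℝ) = ∏ j ∈ range r, ((q : ℝ) - j) := by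
    rw [Nat.descFactorial_eq_prod_range]
    push_cast [Nat.cast_prod]
    refine Finset.prod_congr rfl fun j hj => ?_
    rw [Nat.cast_sub (le_trans (Nat.le_of_lt_succ (Nat.lt_succ_of_lt (Finset.mem_range.mp hj))) hr)]
  have hprod : ∏ j ∈ range r, (1 - (j : ℝ) / q) = (∏ j ∈ range r, ((q : ℝ) - j)) / (q : ℝ) ^ r := by
    have hc : (q : ℝ) ^ r = ∏ _j ∈ range r, (q : ℝ) := by
      rw [Finset.prod_const, Finset.card_range]
    rw [hc, ← Finset.prod_div_distrib]
    refine Finset.prod_congr rfl fun j hj => ?_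
    rw [sub_div, div_self hqR.ne']
  have hz : (q : ℝ) ^ ((1 : ℤ) - (r : ℤ)) = (q : ℝ) / (q : ℝ) ^ r := by
    rw [zpow_sub₀ hqR.ne', zpow_one, zpow_natCast, div_eq_mul_inv]
  rw [hchoose, hdesc, hprod, hz]
  have hfr : (0:ℝ) < r.factorial := by positivity
  have hqr : (0:ℝ) < (q:ℝ) ^ r := by positivity
  field_simp

lemma geo_term (k : ℕ) :
    ((k : ℝ) + 2) * ((k : ℝ) + 1) / k.factorial ≤ 28 * (1 / 2 : ℝ) ^ k := by
  have main : ∀ m : ℕ, 3 ≤ m → ((m : ℝ) + 2) * ((m : ℝ) + 1) / m.factorial ≤ 28 * (1 / 2 : ℝ) ^ m := by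
    intro m hm
    induction m, hm using Nat.le_induction with
    | base => norm_num [Nat.factorial]
    | succ m hm ih =>
      push_cast
      have hf : (0 : ℝ) < m.factorial := by positivity
      have hm3 : (3 : ℝ) ≤ m := by exact_mod_cast hm
      have hfs : ((m + 1).factorial : ℝ) = ((m : ℝ) + 1) * m.factorial := by
        rw [Nat.factorial_succ]; push_cast; ring
      have h1 : ((m : ℝ) + 1 + 2) * ((m : ℝ) + 1 + 1) / (m + 1).factorial
          ≤ 1 / 2 * (((m : ℝ) + 2) * ((m : ℝ) + 1) / m.factorial) := by
        rw [hfs, div_le_iff₀ (by positivity)]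
        have h2 : 1 / 2 * (((m : ℝ) + 2) * ((m : ℝ) + 1) / m.factorial) * (((m : ℝ) + 1) * m.factorial)
            = ((m : ℝ) + 2) * ((m : ℝ) + 1) ^ 2 / 2 * (m.factorial / m.factorial) := by ring
        rw [h2, div_self hf.ne', mul_one]
        nlinarith
      calc ((m : ℝ) + 1 + 2) * ((m : ℝ) + 1 + 1) / (m + 1).factorial
          ≤ 1 / 2 * (((m : ℝ) + 2) * ((m : ℝ) + 1) / m.factorial) := h1
        _ ≤ 1 / 2 * (28 * (1 / 2 : ℝ) ^ m) := by linarith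
        _ = 28 * (1 / 2 : ℝ) ^ (m + 1) := by rw [pow_succ]; ring
  match k with
  | 0 => norm_num [Nat.factorial]
  | 1 => norm_num [Nat.factorial]
  | 2 => norm_num [Nat.factorial]
  | (j + 3) => { push_cast; have := main (j + 3) (by omega); push_cast at this; exact this }

lemma geo_sum (K : ℕ) :
    ∑ k ∈ range K, ((k : ℝ) + 2) * ((k : ℝ) + 1) / k.factorial ≤ 56 := by
  calc ∑ k ∈ range K, ((k : ℝ) + 2) * ((k : ℝ) + 1) / k.factorial
      ≤ ∑ k ∈ range K, 28 * (1 / 2 : ℝ) ^ k := Finset.sum_le_sum fun k _ => geo_term k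
    _ = 28 * ∑ k ∈ range K, (1 / 2 : ℝ) ^ k := by rw [Finset.mul_sum]
    _ ≤ 28 * 2 := by
        have h := geom_sum_eq (by norm_num : (1 / 2 : ℝ) ≠ 1) K
        have hp : (0:ℝ) ≤ (1/2:ℝ)^K := by positivity
        have : ∑ k ∈ range K, (1 / 2 : ℝ) ^ k ≤ 2 := by
          rw [h]; rw [div_le_iff_of_neg (by norm_num : (1/2:ℝ) - 1 < 0)]; linarith
        linarith
    _ = 56 := by norm_num

lemma term_est (q : ℕ) (hq : 0 < q) (k : ℕ) (hk : k + 2 ≤ q) :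
    |(-1 : ℝ) ^ (k + 1) *
        ((q.choose (k + 2) : ℝ) * (q : ℝ) ^ ((1 : ℤ) - ((k + 2 : ℕ) : ℤ)) -
          (q : ℝ) / ((k + 2).factorial : ℝ)) -
      (-1 : ℝ) ^ k / (2 * (k.factorial : ℝ))| ≤
    ((k : ℝ) + 2) * ((k : ℝ) + 1) / (8 * q * k.factorial) := by
  have hQ : (0 : ℝ) < q := by exact_mod_cast hq
  have hF : (0 : ℝ) < (k.factorial : ℝ) := by positivity
  set P := ∏ j ∈ range (k + 2), (1 - (j : ℝ) / q) with hP
  obtain ⟨hP1, hP2⟩ := prod_one_sub_bounds q hq (k + 2) hk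
  set c : ℝ := ((k : ℝ) + 2) * ((k : ℝ) + 1) / 2 with hc
  have hc0 : (0 : ℝ) < c := by positivity
  have hgauss : (∑ j ∈ range (k + 2), (j : ℝ)) = c := by
    have h2 := Finset.sum_range_id_mul_two (k + 2)
    have h3 : ((∑ j ∈ range (k + 2), j : ℕ) : ℝ) * 2 = ((k + 2) * (k + 1) : ℕ) := by
      exact_mod_cast congrArg (Nat.cast : ℕ → ℝ) h2
    push_cast at h3
    rw [hc]
    push_cast
    linarith
  rw [hgauss] at hP1 hP2
  have hfact : (((k + 2).factorial : ℕ) : ℝ) = 2 * c * (k.factorial : ℝ) := by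
    rw [Nat.factorial_succ, Nat.factorial_succ, hc]
    push_cast
    ring
  have hid := choose_zpow_eq q hq (k + 2) hk
  rw [hid, ← hP]
  set D : ℝ := (q : ℝ) / ((k + 2).factorial : ℝ) * (P - 1) + 1 / (2 * (k.factorial : ℝ)) with hD
  have hexpr : (-1 : ℝ) ^ (k + 1) * ((q : ℝ) / ((k + 2).factorial : ℝ) * P -
      (q : ℝ) / ((k + 2).factorial : ℝ)) - (-1 : ℝ) ^ k / (2 * (k.factorial : ℝ))
      = (-1 : ℝ) ^ (k + 1) * D := by
    rw [hD, pow_succ]; ring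
  rw [hexpr, abs_mul, abs_pow, abs_neg, abs_one, one_pow, one_mul]
  have hcoef : (q : ℝ) / ((k + 2).factorial : ℝ) = (q : ℝ) / (2 * c * (k.factorial : ℝ)) := by
    rw [hfact]
  have hpos : (0 : ℝ) < (q : ℝ) / (2 * c * (k.factorial : ℝ)) := by positivity
  have htgt : ((k : ℝ) + 2) * ((k : ℝ) + 1) / (8 * q * k.factorial) = c / (4 * q * k.factorial) := by
    rw [hc]; ring
  rw [htgt]
  have hEq1 : (q : ℝ) / (2 * c * (k.factorial : ℝ)) * ((1 - c / q) - 1) = -(1 / (2 * (k.factorial : ℝ))) := by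
    field_simp
    ring
  have hEq2 : (q : ℝ) / (2 * c * (k.factorial : ℝ)) * ((1 - c / q + (c / q) ^ 2 / 2) - 1)
      = -(1 / (2 * (k.factorial : ℝ))) + c / (4 * q * k.factorial) := by
    field_simp
    ring
  have hmul1 := mul_le_mul_of_nonneg_left (by linarith : (1 - c / q) - 1 ≤ P - 1) hpos.le
  have hmul2 := mul_le_mul_of_nonneg_left (by linarith : P - 1 ≤ (1 - c / q + (c / q) ^ 2 / 2) - 1) hpos.le
  rw [hEq1] at hmul1
  rw [hEq2] at hmul2
  have hpos2 : (0 : ℝ) ≤ c / (4 * q * k.factorial) := by positivity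
  rw [abs_le]
  constructor
  · rw [hD, hcoef]; linarith
  · rw [hD, hcoef]; linarith

/-- an explicit bound for the tail of the inclusion–exclusion sum. -/
theorem sum_binomial_tail_estimate (q n s : ℕ)
    (hq : ∃ p k : ℕ, p.Prime ∧ 1 ≤ k ∧ q = p ^ k)
    (hs1 : 1 ≤ s) (hs2 : s ≤ n - 1) (hqn : n - s ≤ q) :
    |(∑ r ∈ Finset.Icc 1 (n - s), (-1 : ℝ) ^ (r - 1) *
        ((q.choose r : ℝ) * (q : ℝ) ^ ((1 : ℤ) - (r : ℤ)) -
          (q : ℝ) / (Nat.factorial r : ℝ))) -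
      1 / (2 * Real.exp 1)| ≤
        1 / (2 * (Nat.factorial (n - s - 1) : ℝ)) + 7 / (q : ℝ) := by
  have hq1 : 0 < q := by
    obtain ⟨p, k, hp, hk, rfl⟩ := hq
    exact Nat.pow_pos hp.pos
  have hQ : (0 : ℝ) < q := by exact_mod_cast hq1
  have hm : 1 ≤ n - s := by omega
  obtain ⟨m1, hm1⟩ : ∃ m1, n - s = m1 + 1 := ⟨n - s - 1, by omega⟩
  have hm1' : n - s - 1 = m1 := by omega
  -- convert sum
  have hstep : (∑ r ∈ Finset.Icc 1 (n - s), (-1 : ℝ) ^ (r - 1) *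
        ((q.choose r : ℝ) * (q : ℝ) ^ ((1 : ℤ) - (r : ℤ)) -
          (q : ℝ) / (Nat.factorial r : ℝ)))
      = ∑ i ∈ range m1, (-1 : ℝ) ^ (i + 1) *
        ((q.choose (i + 2) : ℝ) * (q : ℝ) ^ ((1 : ℤ) - ((i + 2 : ℕ) : ℤ)) -
          (q : ℝ) / ((i + 2).factorial : ℝ)) := by
    rw [← Finset.Ico_add_one_right_eq_Icc, Finset.sum_Ico_eq_sum_range]
    have hlen : n - s + 1 - 1 = m1 + 1 := by omega
    rw [hlen, Finset.sum_range_succ']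
    have h0 : (-1 : ℝ) ^ (1 + 0 - 1) *
        ((q.choose (1 + 0) : ℝ) * (q : ℝ) ^ ((1 : ℤ) - ((1 + 0 : ℕ) : ℤ)) -
          (q : ℝ) / ((1 + 0).factorial : ℝ)) = 0 := by
      norm_num [Nat.choose_one_right]
    rw [h0, add_zero]
    refine Finset.sum_congr rfl fun i _ => ?_
    have h12 : 1 + (i + 1) = i + 2 := by omega
    rw [h12]
    norm_num
  rw [hstep]
  -- main estimates
  set A : ℕ → ℝ := fun i => (-1 : ℝ) ^ i / (2 * (i.factorial : ℝ)) with hA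
  set G : ℕ → ℝ := fun i => (-1 : ℝ) ^ (i + 1) *
        ((q.choose (i + 2) : ℝ) * (q : ℝ) ^ ((1 : ℤ) - ((i + 2 : ℕ) : ℤ)) -
          (q : ℝ) / ((i + 2).factorial : ℝ)) with hG
  have htri : |(∑ i ∈ range m1, G i) - 1 / (2 * Real.exp 1)|
      ≤ (∑ i ∈ range m1, |G i - A i|) + |(∑ i ∈ range m1, A i) - 1 / (2 * Real.exp 1)| := by
    have hsplit : (∑ i ∈ range m1, G i) - 1 / (2 * Real.exp 1)
        = (∑ i ∈ range m1, (G i - A i)) + ((∑ i ∈ range m1, A i) - 1 / (2 * Real.exp 1)) := by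
      rw [Finset.sum_sub_distrib]; ring
    rw [hsplit]
    exact le_trans (abs_add_le _ _) (by
      have := Finset.abs_sum_le_sum_abs (fun i => G i - A i) (range m1)
      linarith)
  have herr : (∑ i ∈ range m1, |G i - A i|) ≤ 7 / q := by
    have h1 : ∀ i ∈ range m1, |G i - A i| ≤ ((i : ℝ) + 2) * ((i : ℝ) + 1) / (8 * q * i.factorial) := by
      intro i hi
      have hik : i + 2 ≤ q := by
        have := Finset.mem_range.mp hi
        omega
      exact term_est q hq1 i hik
    calc (∑ i ∈ range m1, |G i - A i|)
        ≤ ∑ i ∈ range m1, ((i : ℝ) + 2) * ((i : ℝ) + 1) / (8 * q * i.factorial) :=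
          Finset.sum_le_sum h1
      _ = (∑ i ∈ range m1, ((i : ℝ) + 2) * ((i : ℝ) + 1) / i.factorial) / (8 * q) := by
          rw [Finset.sum_div]
          refine Finset.sum_congr rfl fun i _ => ?_
          have hfi : (0:ℝ) < (i.factorial : ℝ) := by positivity
          field_simp
      _ ≤ 56 / (8 * q) := by
          apply div_le_div_of_nonneg_right (geo_sum m1) (by positivity)
      _ = 7 / q := by field_simp; ring
  have hmain : |(∑ i ∈ range m1, A i) - 1 / (2 * Real.exp 1)| ≤ 1 / (2 * (m1.factorial : ℝ)) := by
    have hAsum : (∑ i ∈ range m1, A i) = (∑ i ∈ range m1, (-1 : ℝ) ^ i / (i.factorial : ℝ)) / 2 := by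
      rw [Finset.sum_div]
      refine Finset.sum_congr rfl fun i _ => ?_
      rw [hA]
      ring
    have hE : 1 / (2 * Real.exp 1) = Real.exp (-1) / 2 := by
      rw [Real.exp_neg]
      field_simp
    rw [hAsum, hE, div_sub_div_same, abs_div, abs_two]
    have := exp_partial_bound m1
    have hfm : (0:ℝ) < (m1.factorial : ℝ) := by positivity
    rw [div_le_div_iff₀ (by norm_num) (by positivity)]
    calc |(∑ i ∈ range m1, (-1 : ℝ) ^ i / (i.factorial : ℝ)) - Real.exp (-1)| * (2 * m1.factorial)
        ≤ (1 / m1.factorial) * (2 * m1.factorial) := by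
          apply mul_le_mul_of_nonneg_right this (by positivity)
      _ = 1 * 2 := by field_simp
  rw [hm1']
  calc |(∑ i ∈ range m1, G i) - 1 / (2 * Real.exp 1)|
      ≤ (∑ i ∈ range m1, |G i - A i|) + |(∑ i ∈ range m1, A i) - 1 / (2 * Real.exp 1)| := htri
    _ ≤ 7 / q + 1 / (2 * (m1.factorial : ℝ)) := add_le_add herr hmain
    _ = 1 / (2 * (m1.factorial : ℝ)) + 7 / q := by ring
end

section
/- Let 1 ≤ s ≤ r and let x ∈ K^r be a point at which every s×s minor of the s×r matrix (∂Π_i/∂X_j(x))_{1≤i≤s, 1≤j≤r} vanishes. Then x has at most s−1 pairwise-distinct coordinates; equivalently, if x has at least s pairwise-distinct coordinates then the matrix has full rank s. -/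
open MvPolynomial Finset

section aux
variable {K : Type*} [Field K]

lemma pderiv_prod_X' {σ : Type*} [DecidableEq σ] {R : Type*} [CommSemiring R] (j : σ)
    (A : Finset σ) :
    pderiv j (∏ a ∈ A, (X a : MvPolynomial σ R)) =
      if j ∈ A then ∏ a ∈ A.erase j, (X a : MvPolynomial σ R) else 0 := by
  induction A using Finset.induction_on with
  | empty => simp
  | @insert a A ha ih =>
      rw [Finset.prod_insert ha, pderiv_mul, ih]
      by_cases h : j = a
      · subst h
        simp [Finset.erase_insert ha, ha]
      · rw [pderiv_X_of_ne (Ne.symm h)]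
        by_cases hA : j ∈ A
        · have ha' : a ∉ A.erase j := fun hc => ha (Finset.mem_of_mem_erase hc)
          simp [hA, h, Finset.erase_insert_of_ne (Ne.symm h), Finset.prod_insert ha']
        · simp [hA, h]

/-- Elementary symmetric value on a finset. -/
def eS {r : ℕ} (x : Fin r → K) (S : Finset (Fin r)) (n : ℕ) : K :=
  ∑ A ∈ S.powersetCard n, ∏ a ∈ A, x a

lemma eS_zero {r : ℕ} (x : Fin r → K) (S : Finset (Fin r)) : eS x S 0 = 1 := by
  simp [eS]

lemma eS_erase {r : ℕ} (x : Fin r → K) {S : Finset (Fin r)} {j : Fin r} (hj : j ∈ S) (n : ℕ) :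
    eS x S (n + 1) = eS x (S.erase j) (n + 1) + x j * eS x (S.erase j) n := by
  have h1 : S = insert j (S.erase j) := (Finset.insert_erase hj).symm
  rw [eS]
  conv_lhs => rw [h1]
  rw [Finset.powersetCard_succ_insert (Finset.notMem_erase j S), Finset.sum_union ?disj]
  case disj =>
    rw [Finset.disjoint_left]
    intro A hA hA'
    obtain ⟨B, hB, rfl⟩ := Finset.mem_image.mp hA'
    exact Finset.notMem_erase j S ((Finset.mem_powersetCard.mp hA).1 (Finset.mem_insert_self j B))
  congr 1
  rw [Finset.sum_image ?inj]
  case inj =>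
    intro A hA B hB hAB
    have hjA : j ∉ A := fun hc =>
      Finset.notMem_erase j S ((Finset.mem_powersetCard.mp hA).1 hc)
    have hjB : j ∉ B := fun hc =>
      Finset.notMem_erase j S ((Finset.mem_powersetCard.mp hB).1 hc)
    rw [← Finset.erase_insert hjA, ← Finset.erase_insert hjB, hAB]
  rw [eS, Finset.mul_sum]
  refine Finset.sum_congr rfl fun A hA => ?_
  have hjA : j ∉ A := fun hc =>
    Finset.notMem_erase j S ((Finset.mem_powersetCard.mp hA).1 hc)
  rw [Finset.prod_insert hjA]

lemma eS_alt {r : ℕ} (x : Fin r → K) {S : Finset (Fin r)} {j : Fin r} (hj : j ∈ S) (k : ℕ) :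
    ∑ m ∈ Finset.range (k + 1), (-1 : K) ^ m * x j ^ m * eS x S (k - m) =
      eS x (S.erase j) k := by
  induction k with
  | zero => simp [eS_zero]
  | succ k ih =>
      rw [Finset.sum_range_succ']
      have h2 : ∀ m ∈ Finset.range (k + 1),
          (-1 : K) ^ (m + 1) * x j ^ (m + 1) * eS x S (k + 1 - (m + 1)) =
            (-(x j)) * ((-1 : K) ^ m * x j ^ m * eS x S (k - m)) := by
        intro m hm
        have : k + 1 - (m + 1) = k - m := by omega
        rw [this, pow_succ, pow_succ]
        ring
      rw [Finset.sum_congr rfl h2, ← Finset.mul_sum, ih]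
      simp only [pow_zero, one_mul, Nat.sub_zero]
      rw [eS_erase x hj k]
      ring

lemma eval_pderiv_esymm {r : ℕ} (x : Fin r → K) (j : Fin r) (k : ℕ) :
    eval x (pderiv j (esymm (Fin r) K (k + 1))) = eS x (Finset.univ.erase j) k := by
  rw [esymm, map_sum, map_sum]
  simp_rw [pderiv_prod_X', apply_ite (eval x), map_prod, eval_X, map_zero]
  rw [Finset.sum_ite, Finset.sum_const_zero, add_zero, eS]
  refine Finset.sum_bij' (fun A _ => A.erase j) (fun B _ => insert j B) ?_ ?_ ?_ ?_ ?_
  · intro A hA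
    rw [Finset.mem_filter, Finset.mem_powersetCard] at hA
    rw [Finset.mem_powersetCard]
    exact ⟨Finset.erase_subset_erase j hA.1.1,
      by simp [Finset.card_erase_of_mem hA.2, hA.1.2]⟩
  · intro B hB
    rw [Finset.mem_powersetCard] at hB
    have hjB : j ∉ B := fun hc => Finset.notMem_erase j Finset.univ (hB.1 hc)
    rw [Finset.mem_filter, Finset.mem_powersetCard]
    exact ⟨⟨Finset.subset_univ _, by rw [Finset.card_insert_of_notMem hjB, hB.2]⟩,
      Finset.mem_insert_self j B⟩
  · intro A hA
    rw [Finset.mem_filter] at hA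
    exact Finset.insert_erase hA.2
  · intro B hB
    rw [Finset.mem_powersetCard] at hB
    exact Finset.erase_insert fun hc => Finset.notMem_erase j Finset.univ (hB.1 hc)
  · intro A hA
    rfl

end aux

section matrixpart
variable {K : Type*} [Field K]

lemma minor_det_eq {r s : ℕ} (x : Fin r → K) (hsr : s ≤ r) (M : Matrix (Fin s) (Fin r) K)
    (hM : M = Matrix.of fun (i : Fin s) (j : Fin r) =>
      MvPolynomial.eval x (pderiv j (esymm (Fin r) K ((i : ℕ) + 1)))) (c : Fin s → Fin r) :
    (M.submatrix id c).det =
      (∏ i : Fin s, (-1 : K) ^ (i : ℕ)) * (Matrix.vandermonde (x ∘ c)).det := by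
  set B : Matrix (Fin s) (Fin s) K := Matrix.of fun i m =>
    if (m : ℕ) ≤ (i : ℕ) then (-1 : K) ^ (m : ℕ) * eS x Finset.univ ((i : ℕ) - (m : ℕ)) else 0
    with hB
  have hfac : M.submatrix id c = B * (Matrix.vandermonde (x ∘ c)).transpose := by
    ext i l
    rw [Matrix.mul_apply]
    have : ∀ m : Fin s, B i m * (Matrix.vandermonde (x ∘ c)).transpose m l =
        (fun m' : ℕ => (if m' ≤ (i : ℕ) then (-1 : K) ^ m' * eS x Finset.univ ((i : ℕ) - m')
          else 0) * x (c l) ^ m') (m : ℕ) := by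
      intro m
      simp [hB, Matrix.vandermonde]
    rw [Finset.sum_congr rfl fun m _ => this m,
      Fin.sum_univ_eq_sum_range (fun m' : ℕ =>
        (if m' ≤ (i : ℕ) then (-1 : K) ^ m' * eS x Finset.univ ((i : ℕ) - m')
          else 0) * x (c l) ^ m') s]
    rw [← Finset.sum_subset (Finset.range_subset_range.mpr i.isLt)
      (fun m _ hm => by
        rw [Finset.mem_range, not_lt] at hm
        rw [if_neg (by omega), zero_mul])]
    rw [Matrix.submatrix_apply, id_eq, hM]
    simp only [Matrix.of_apply]
    rw [eval_pderiv_esymm, ← eS_alt x (Finset.mem_univ (c l)) (i : ℕ), Nat.succ_eq_add_one]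
    refine Finset.sum_congr rfl fun m hm => ?_
    rw [Finset.mem_range] at hm
    rw [if_pos (by omega)]
    ring
  have hBtri : B.BlockTriangular OrderDual.toDual := by
    intro i m h
    have : (i : Fin s) < m := h
    simp only [hB, Matrix.of_apply]
    rw [if_neg (by exact not_le.mpr this)]
  rw [hfac, Matrix.det_mul, Matrix.det_transpose,
    Matrix.det_of_lowerTriangular B hBtri]
  congr 1
  refine Finset.prod_congr rfl fun i _ => ?_
  simp [hB, eS_zero]

end matrixpart

/-- if every s×s minor of the Jacobian of Π₁,…,Π_s at x vanishes,
then x has at most s−1 pairwise-distinct coordinates; equivalently, if x has at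
least s pairwise-distinct coordinates then the matrix has full rank s. -/
theorem jacobian_esymm_minors_and_distinct_coordinates (K : Type*) [Field K]
    [DecidableEq K] (r s : ℕ) (hs : 1 ≤ s) (hsr : s ≤ r) (x : Fin r → K)
    (M : Matrix (Fin s) (Fin r) K)
    (hM : M = Matrix.of fun (i : Fin s) (j : Fin r) => MvPolynomial.eval x (pderiv j (esymm (Fin r) K ((i : ℕ) + 1)))) :
    ((∀ c : Fin s → Fin r, Function.Injective c → (M.submatrix id c).det = 0) →
        (Finset.univ.image x).card ≤ s - 1) ∧
      (s ≤ (Finset.univ.image x).card → M.rank = s) := by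
  have hunit : (∏ i : Fin s, (-1 : K) ^ (i : ℕ)) ≠ 0 := by
    apply Finset.prod_ne_zero_iff.mpr
    intro i _
    exact pow_ne_zero _ (neg_ne_zero.mpr one_ne_zero)
  have hexists : s ≤ (Finset.univ.image x).card →
      ∃ c : Fin s → Fin r, Function.Injective c ∧ (M.submatrix id c).det ≠ 0 := by
    intro h
    obtain ⟨T, hTsub, hTcard⟩ := Finset.exists_subset_card_eq h
    let e : Fin s ≃ {a // a ∈ T} := (T.equivFin.trans (finCongr hTcard)).symm
    have hch : ∀ i : Fin s, ∃ j : Fin r, x j = (e i : K) := by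
      intro i
      have h2 := hTsub (e i).2
      rw [Finset.mem_image] at h2
      obtain ⟨j, _, hj⟩ := h2
      exact ⟨j, hj⟩
    choose c hc using hch
    have hxc : Function.Injective (x ∘ c) := by
      intro a b hab
      simp only [Function.comp_apply, hc] at hab
      exact e.injective (Subtype.val_injective hab)
    refine ⟨c, fun a b hab => hxc (by rw [Function.comp_apply, Function.comp_apply, hab]), ?_⟩
    rw [minor_det_eq x hsr M hM c]
    exact mul_ne_zero hunit (Matrix.det_vandermonde_ne_zero_iff.mpr hxc)
  constructor
  · intro hmin
    by_contra hcard
    have h : s ≤ (Finset.univ.image x).card := by omega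
    obtain ⟨c, hcinj, hdet⟩ := hexists h
    exact hdet (hmin c hcinj)
  · intro h
    obtain ⟨c, hcinj, hdet⟩ := hexists h
    refine le_antisymm ?_ ?_
    · simpa using M.rank_le_card_height
    · have h1 : (M.submatrix id c).rank = s := by
        rw [Matrix.rank_of_isUnit _ ((Matrix.isUnit_iff_isUnit_det _).mpr
          (isUnit_iff_ne_zero.mpr hdet))]
        simp
      have h2 : M.submatrix id c =
          M * (1 : Matrix (Fin r) (Fin r) K).submatrix (Equiv.refl (Fin r)) c := by
        rw [Matrix.mul_submatrix_one]
        rfl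
      calc s = (M.submatrix id c).rank := h1.symm
        _ ≤ M.rank := by rw [h2]; exact Matrix.rank_mul_le_left _ _
end
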